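/- Fix q ∈ (0,1), ν ∈ [0,1), α > 0 and a function g : ℤ → ℕ. On a probability space, let (B_m)_{m∈ℤ} and (B'_m)_{m∈ℤ} be a mutually independent family of random variables where B_m is Bernoulli with success probability α(1−q^{g(m)})/(1+α) and B'_m is Bernoulli with success probability (α+νq^{g(m)})/(1+α). For n ∈ ℤ let K_n := Σ_{m ≤ n} (∏_{j=m+1}^{n} (B'_j − B_j)) · B_m (the series converges absolutely almost surely and in L^2). Then for all integers n₁ ≥ n₂ one has Cov(K_{n₁}, K_{n₂}) = (∏_{k=n₂+1}^{n₁} ((ν+α)q^{g(k)})/(1+α)) · (1 − E(K_{n₂})) · E(K_{n₂}), where Cov(X,Y) := E(XY) − E(X)E(Y). -/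

import Mathlib

open MeasureTheory ProbabilityTheory

/-- The a.s. limit `K_n = ∑_{m ≤ n} (∏_{j=m+1}^{n} (B'_j − B_j)) · B_m`. -/
noncomputable def kpzKinf {Ω : Type*} (B B' : ℤ → Ω → ℝ) (n : ℤ) (ω : Ω) : ℝ :=
  ∑' m : {m : ℤ // m ≤ n},
    (∏ j ∈ Finset.Icc ((m : ℤ) + 1) n, (B' j ω - B j ω)) * B (m : ℤ) ω

noncomputable def kpzF {Ω : Type*} (B B' : ℤ → Ω → ℝ) (m₀ n : ℤ) (ω : Ω) : ℝ :=
  ∑ m ∈ Finset.Icc m₀ n, (∏ j ∈ Finset.Icc (m + 1) n, (B' j ω - B j ω)) * B m ω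

section aux
variable {Ω : Type*} (B B' : ℤ → Ω → ℝ)

lemma kpzF_succ (m₀ n : ℤ) (h : m₀ ≤ n + 1) (ω : Ω) :
    kpzF B B' m₀ (n + 1) ω
      = (B' (n + 1) ω - B (n + 1) ω) * kpzF B B' m₀ n ω + B (n + 1) ω := by
  unfold kpzF
  have h1 : Finset.Icc m₀ (n + 1) = insert (n + 1) (Finset.Icc m₀ n) := by
    ext x; simp only [Finset.mem_Icc, Finset.mem_insert]; omega
  rw [h1, Finset.sum_insert (by simp [Finset.mem_Icc])]
  have h2 : Finset.Icc (n + 1 + 1) (n + 1) = (∅ : Finset ℤ) := Finset.Icc_eq_empty (by omega)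
  rw [h2, Finset.prod_empty, one_mul, add_comm, Finset.mul_sum]
  congr 1
  apply Finset.sum_congr rfl
  intro m hm
  have hm' := Finset.mem_Icc.mp hm
  have h3 : Finset.Icc (m + 1) (n + 1) = insert (n + 1) (Finset.Icc (m + 1) n) := by
    ext x; simp only [Finset.mem_Icc, Finset.mem_insert]; omega
  rw [h3, Finset.prod_insert (by simp [Finset.mem_Icc])]
  ring

lemma kpzF_mem (hB01 : ∀ m ω, B m ω = 0 ∨ B m ω = 1) (hB'01 : ∀ m ω, B' m ω = 0 ∨ B' m ω = 1)
    (m₀ n : ℤ) (ω : Ω) : kpzF B B' m₀ n ω = 0 ∨ kpzF B B' m₀ n ω = 1 := by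
  rcases lt_or_ge n m₀ with h | h
  · left; unfold kpzF; rw [Finset.Icc_eq_empty (by omega), Finset.sum_empty]
  · refine Int.le_induction (motive := fun n _ => kpzF B B' m₀ n ω = 0 ∨ kpzF B B' m₀ n ω = 1) ?_ ?_ n h
    · beta_reduce
      unfold kpzF
      rw [Finset.Icc_self, Finset.sum_singleton, Finset.Icc_eq_empty (by omega),
        Finset.prod_empty, one_mul]
      exact hB01 m₀ ω
    · intro n hn ih
      beta_reduce at ih ⊢
      rw [kpzF_succ B B' m₀ n (by omega) ω]
      rcases ih with h0 | h1
      · rw [h0, mul_zero, zero_add]; exact hB01 (n+1) ω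
      · rw [h1, mul_one]
        have : B' (n+1) ω - B (n+1) ω + B (n+1) ω = B' (n+1) ω := by ring
        rw [this]; exact hB'01 (n+1) ω

lemma kpzF_abs_le_one (hB01 : ∀ m ω, B m ω = 0 ∨ B m ω = 1)
    (hB'01 : ∀ m ω, B' m ω = 0 ∨ B' m ω = 1) (m₀ n : ℤ) (ω : Ω) :
    |kpzF B B' m₀ n ω| ≤ 1 := by
  rcases kpzF_mem B B' hB01 hB'01 m₀ n ω with h | h <;> rw [h] <;> norm_num

lemma kpzF_split (m₀ n₂ n₁ : ℤ) (h1 : m₀ ≤ n₂) (h2 : n₂ ≤ n₁) (ω : Ω) :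
    kpzF B B' m₀ n₁ ω
      = (∏ k ∈ Finset.Icc (n₂ + 1) n₁, (B' k ω - B k ω)) * kpzF B B' m₀ n₂ ω
        + kpzF B B' (n₂ + 1) n₁ ω := by
  refine Int.le_induction (motive := fun n₁ _ => kpzF B B' m₀ n₁ ω
      = (∏ k ∈ Finset.Icc (n₂ + 1) n₁, (B' k ω - B k ω)) * kpzF B B' m₀ n₂ ω
        + kpzF B B' (n₂ + 1) n₁ ω) ?_ ?_ n₁ h2
  · beta_reduce
    rw [Finset.Icc_eq_empty (by omega), Finset.prod_empty, one_mul]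
    have : kpzF B B' (n₂ + 1) n₂ ω = 0 := by
      unfold kpzF; rw [Finset.Icc_eq_empty (by omega), Finset.sum_empty]
    rw [this, add_zero]
  · intro n hn ih
    beta_reduce at ih ⊢
    rw [kpzF_succ B B' m₀ n (by omega) ω, kpzF_succ B B' (n₂+1) n (by omega) ω, ih]
    have h3 : Finset.Icc (n₂ + 1) (n + 1) = insert (n + 1) (Finset.Icc (n₂ + 1) n) := by
      ext x; simp only [Finset.mem_Icc, Finset.mem_insert]; omega
    rw [h3, Finset.prod_insert (by simp [Finset.mem_Icc])]
    ring

lemma kpzKinf_eq_kpzF (n m₀ j₀ : ℤ) (ω : Ω) (hj : j₀ ≤ n) (hm : m₀ ≤ j₀)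
    (hD : B' j₀ ω - B j₀ ω = 0) :
    kpzKinf B B' n ω = kpzF B B' m₀ n ω := by
  classical
  unfold kpzKinf kpzF
  rw [tsum_eq_sum (s := (Finset.Icc m₀ n).subtype (· ≤ n))
    (by
      intro b hb
      rw [Finset.mem_subtype] at hb
      have hb2 : (b : ℤ) < m₀ := by
        have := b.2
        rw [Finset.mem_Icc] at hb
        omega
      have hjmem : j₀ ∈ Finset.Icc ((b : ℤ) + 1) n := by rw [Finset.mem_Icc]; omega
      rw [Finset.prod_eq_zero hjmem hD, zero_mul])]
  rw [← Finset.sum_subtype_map_embedding (f := fun m : {m : ℤ // m ≤ n} =>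
      (∏ j ∈ Finset.Icc ((m : ℤ) + 1) n, (B' j ω - B j ω)) * B (m : ℤ) ω)
      (g := fun m : ℤ => (∏ j ∈ Finset.Icc (m + 1) n, (B' j ω - B j ω)) * B m ω)
      (fun m _ => rfl)]
  rw [Finset.subtype_map, Finset.filter_true_of_mem]
  intro x hx
  rw [Finset.mem_Icc] at hx
  omega
end aux

def Jset (A : Finset ℤ) : Finset (ℤ ⊕ ℤ) := A.image Sum.inl ∪ A.image Sum.inr

noncomputable def extB (A : Finset ℤ) (x : {i // i ∈ Jset A} → ℝ) (j : ℤ) : ℝ :=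
  if h : Sum.inl j ∈ Jset A then x ⟨Sum.inl j, h⟩ else 0

noncomputable def extB' (A : Finset ℤ) (x : {i // i ∈ Jset A} → ℝ) (j : ℤ) : ℝ :=
  if h : Sum.inr j ∈ Jset A then x ⟨Sum.inr j, h⟩ else 0

lemma measurable_extB (A : Finset ℤ) (j : ℤ) : Measurable (fun x => extB A x j) := by
  unfold extB; split_ifs with h
  exacts [measurable_pi_apply _, measurable_const]

lemma measurable_extB' (A : Finset ℤ) (j : ℤ) : Measurable (fun x => extB' A x j) := by
  unfold extB'; split_ifs with h
  exacts [measurable_pi_apply _, measurable_const]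

lemma extB_apply {Ω : Type*} (B B' : ℤ → Ω → ℝ) (A : Finset ℤ) {j : ℤ} (hj : j ∈ A) (a : Ω) :
    extB A (fun i => Sum.elim B B' i.1 a) j = B j a := by
  have h : Sum.inl j ∈ Jset A := by simp [Jset, hj]
  rw [extB, dif_pos h]; rfl

lemma extB'_apply {Ω : Type*} (B B' : ℤ → Ω → ℝ) (A : Finset ℤ) {j : ℤ} (hj : j ∈ A) (a : Ω) :
    extB' A (fun i => Sum.elim B B' i.1 a) j = B' j a := by
  have h : Sum.inr j ∈ Jset A := by simp [Jset, hj]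
  rw [extB', dif_pos h]; rfl

lemma Jset_disjoint {A₁ A₂ : Finset ℤ} (h : Disjoint A₁ A₂) : Disjoint (Jset A₁) (Jset A₂) := by
  rw [Finset.disjoint_left] at h ⊢
  intro x hx1 hx2
  simp only [Jset, Finset.mem_union, Finset.mem_image] at hx1 hx2
  rcases hx1 with ⟨a, ha, rfl⟩ | ⟨a, ha, rfl⟩ <;>
    rcases hx2 with ⟨b, hb, hba⟩ | ⟨b, hb, hba⟩ <;>
    simp_all

set_option maxHeartbeats 2000000 in
/-- With `B_m ~ Ber(α(1−q^{g(m)})/(1+α))`, `B'_m ~ Ber((α+νq^{g(m)})/(1+α))`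
all mutually independent, for all `n₁ ≥ n₂`,
`Cov(K_{n₁}, K_{n₂}) = (∏_{k=n₂+1}^{n₁} ((ν+α)q^{g(k)})/(1+α)) · (1 − E(K_{n₂})) · E(K_{n₂})`. -/
theorem kpz_K_covariance
    {Ω : Type*} [MeasurableSpace Ω] (μ : Measure Ω) [IsProbabilityMeasure μ]
    (q ν α : ℝ) (hq0 : 0 < q) (hq1 : q < 1) (hν0 : 0 ≤ ν) (hν1 : ν < 1) (hα : 0 < α)
    (g : ℤ → ℕ)
    (B B' : ℤ → Ω → ℝ)
    (hBmeas : ∀ m, Measurable (B m)) (hB'meas : ∀ m, Measurable (B' m))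
    (hB01 : ∀ m ω, B m ω = 0 ∨ B m ω = 1)
    (hB'01 : ∀ m ω, B' m ω = 0 ∨ B' m ω = 1)
    (hBp : ∀ m, μ {ω | B m ω = 1} = ENNReal.ofReal (α * (1 - q ^ g m) / (1 + α)))
    (hB'p : ∀ m, μ {ω | B' m ω = 1} = ENNReal.ofReal ((α + ν * q ^ g m) / (1 + α)))
    (hindep : iIndepFun (Sum.elim B B') μ)
    (n₁ n₂ : ℤ) (hn : n₂ ≤ n₁) :
    (∫ ω, kpzKinf B B' n₁ ω * kpzKinf B B' n₂ ω ∂μ)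
        - (∫ ω, kpzKinf B B' n₁ ω ∂μ) * (∫ ω, kpzKinf B B' n₂ ω ∂μ) =
      (∏ k ∈ Finset.Icc (n₂ + 1) n₁, ((ν + α) * q ^ g k) / (1 + α)) *
        (1 - ∫ ω, kpzKinf B B' n₂ ω ∂μ) * (∫ ω, kpzKinf B B' n₂ ω ∂μ) := by
  classical
  have hα1 : (0:ℝ) < 1 + α := by linarith
  have hqg : ∀ m : ℤ, 0 < q ^ g m ∧ q ^ g m ≤ 1 :=
    fun m => ⟨pow_pos hq0 _, pow_le_one₀ hq0.le hq1.le⟩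
  -- measurability of the elementary family
  have hSumMeas : ∀ i : ℤ ⊕ ℤ, Measurable (Sum.elim B B' i) := by
    rintro (i | i)
    exacts [hBmeas i, hB'meas i]
  -- the master independence lemma
  have master : ∀ (A₁ A₂ : Finset ℤ), Disjoint A₁ A₂ →
      ∀ (φ₁ : ({i // i ∈ Jset A₁} → ℝ) → ℝ) (φ₂ : ({i // i ∈ Jset A₂} → ℝ) → ℝ),
      Measurable φ₁ → Measurable φ₂ →
      IndepFun (fun a => φ₁ (fun i => Sum.elim B B' i.1 a))
        (fun a => φ₂ (fun i => Sum.elim B B' i.1 a)) μ := by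
    intro A₁ A₂ hA φ₁ φ₂ hφ₁ hφ₂
    exact (hindep.indepFun_finset (Jset A₁) (Jset A₂) (Jset_disjoint hA) hSumMeas).comp hφ₁ hφ₂
  -- representations
  have repF : ∀ m₀ n : ℤ, ∃ φ : ({i // i ∈ Jset (Finset.Icc m₀ n)} → ℝ) → ℝ,
      Measurable φ ∧ ∀ a, φ (fun i => Sum.elim B B' i.1 a) = kpzF B B' m₀ n a := by
    intro m₀ n
    refine ⟨fun x => ∑ m ∈ Finset.Icc m₀ n,
      (∏ j ∈ Finset.Icc (m + 1) n, (extB' _ x j - extB _ x j)) * extB _ x m, ?_, ?_⟩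
    · exact Finset.measurable_sum _ fun m _ =>
        ((Finset.measurable_prod _ fun j _ =>
          (measurable_extB' _ j).sub (measurable_extB _ j)).mul (measurable_extB _ m))
    · intro a
      unfold kpzF
      refine Finset.sum_congr rfl fun m hm => ?_
      rw [extB_apply B B' _ hm a]
      congr 1
      refine Finset.prod_congr rfl fun j hj => ?_
      have hjA : j ∈ Finset.Icc m₀ n := by
        rw [Finset.mem_Icc] at hm hj ⊢; omega
      rw [extB'_apply B B' _ hjA a, extB_apply B B' _ hjA a]
  have repP : ∀ a b : ℤ, ∃ φ : ({i // i ∈ Jset (Finset.Icc a b)} → ℝ) → ℝ,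
      Measurable φ ∧ ∀ x : Ω, φ (fun i => Sum.elim B B' i.1 x)
        = ∏ k ∈ Finset.Icc a b, (B' k x - B k x) := by
    intro a b
    refine ⟨fun x => ∏ k ∈ Finset.Icc a b, (extB' _ x k - extB _ x k), ?_, ?_⟩
    · exact Finset.measurable_prod _ fun k _ =>
        (measurable_extB' _ k).sub (measurable_extB _ k)
    · intro x
      refine Finset.prod_congr rfl fun k hk => ?_
      rw [extB'_apply B B' _ hk x, extB_apply B B' _ hk x]
  -- measurability of kpzF and products
  have hFmeas : ∀ m₀ n : ℤ, Measurable (kpzF B B' m₀ n) := by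
    intro m₀ n
    unfold kpzF
    exact Finset.measurable_sum _ fun m _ =>
      ((Finset.measurable_prod _ fun j _ => (hB'meas j).sub (hBmeas j)).mul (hBmeas m))
  have hPmeas : ∀ a b : ℤ, Measurable (fun x => ∏ k ∈ Finset.Icc a b, (B' k x - B k x)) :=
    fun a b => Finset.measurable_prod _ fun k _ => (hB'meas k).sub (hBmeas k)
  have hDbd : ∀ (j : ℤ) (ω : Ω), |B' j ω - B j ω| ≤ 1 := by
    intro j ω
    rcases hB01 j ω with h | h <;> rcases hB'01 j ω with h' | h' <;> rw [h, h'] <;> norm_num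
  have hPbd : ∀ (a b : ℤ) (ω : Ω), |∏ k ∈ Finset.Icc a b, (B' k ω - B k ω)| ≤ 1 := by
    intro a b ω
    rw [Finset.abs_prod]
    exact Finset.prod_le_one (fun k _ => abs_nonneg _) (fun k _ => hDbd k ω)
  have hint_of_bdd : ∀ X : Ω → ℝ, Measurable X → (∀ ω, |X ω| ≤ 1) → Integrable X μ := by
    intro X hm hb
    exact (integrable_const (1:ℝ)).mono' hm.aestronglyMeasurable
      (ae_of_all μ (by simpa [Real.norm_eq_abs] using hb))
  -- Borel-Cantelli: almost every point has some j ≤ n₂ with B' j - B j = 0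
  set c : ℝ := 1 - (1 - ν) / (1 + α) ^ 2 with hc
  have hc1 : ENNReal.ofReal c < 1 := by
    rw [← ENNReal.ofReal_one]
    refine (ENNReal.ofReal_lt_ofReal_iff (by norm_num)).mpr ?_
    rw [hc]
    have : 0 < (1 - ν) / (1 + α) ^ 2 := div_pos (by linarith) (by positivity)
    linarith
  have hEmeas : ∀ j : ℤ, MeasurableSet {ω | B' j ω - B j ω ≠ 0} :=
    fun j => (((hB'meas j).sub (hBmeas j)) (measurableSet_singleton (0:ℝ))).compl
  have hEbound : ∀ j : ℤ, μ {ω | B' j ω - B j ω ≠ 0} ≤ ENNReal.ofReal c := by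
    intro j
    have hBm : MeasurableSet {ω | B j ω = 1} := hBmeas j (measurableSet_singleton (1:ℝ))
    have hB'm : MeasurableSet {ω | B' j ω = 1} := hB'meas j (measurableSet_singleton (1:ℝ))
    have hBc : {ω | B j ω = 1}ᶜ = B j ⁻¹' {0} := by
      ext ω; rcases hB01 j ω with h | h <;> simp [h]
    have hB'c : {ω | B' j ω = 1}ᶜ = B' j ⁻¹' {0} := by
      ext ω; rcases hB'01 j ω with h | h <;> simp [h]
    have hBB' : IndepFun (B j) (B' j) μ := by
      have := hindep.indepFun (show (Sum.inl j : ℤ ⊕ ℤ) ≠ Sum.inr j by simp)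
      exact this
    have hmul : μ (B j ⁻¹' {0} ∩ B' j ⁻¹' {0}) = μ (B j ⁻¹' {0}) * μ (B' j ⁻¹' {0}) :=
      hBB'.measure_inter_preimage_eq_mul _ _ (measurableSet_singleton _)
        (measurableSet_singleton _)
    have htq := (hqg j).1
    have htq1 := (hqg j).2
    have hx0 : (0:ℝ) ≤ 1 - α * (1 - q ^ g j) / (1 + α) := by
      rw [sub_nonneg]
      rw [div_le_one hα1]
      nlinarith
    have hy0 : (0:ℝ) ≤ 1 - (α + ν * q ^ g j) / (1 + α) := by
      rw [sub_nonneg, div_le_one hα1]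
      nlinarith
    have hpB : μ (B j ⁻¹' {0}) = ENNReal.ofReal (1 - α * (1 - q ^ g j) / (1 + α)) := by
      rw [← hBc, measure_compl hBm (measure_ne_top μ _), hBp j, measure_univ,
        ← ENNReal.ofReal_one, ← ENNReal.ofReal_sub _ (by
          apply div_nonneg _ hα1.le
          nlinarith)]
    have hpB' : μ (B' j ⁻¹' {0}) = ENNReal.ofReal (1 - (α + ν * q ^ g j) / (1 + α)) := by
      rw [← hB'c, measure_compl hB'm (measure_ne_top μ _), hB'p j, measure_univ,
        ← ENNReal.ofReal_one, ← ENNReal.ofReal_sub _ (by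
          apply div_nonneg _ hα1.le
          nlinarith)]
    have hsub : {ω | B' j ω - B j ω ≠ 0} ⊆ (B j ⁻¹' {0} ∩ B' j ⁻¹' {0})ᶜ := by
      intro ω hω
      simp only [Set.mem_compl_iff, Set.mem_inter_iff, Set.mem_preimage,
        Set.mem_singleton_iff, not_and]
      intro h0 h0'
      exact hω (by simp [Set.mem_setOf_eq, h0, h0'])
    have hkey : (1 - ν) / (1 + α) ^ 2
        ≤ (1 - α * (1 - q ^ g j) / (1 + α)) * (1 - (α + ν * q ^ g j) / (1 + α)) := by
      have h1 : 1 - α * (1 - q ^ g j) / (1 + α) = (1 + α * q ^ g j) / (1 + α) := by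
        field_simp
        ring
      have h2 : 1 - (α + ν * q ^ g j) / (1 + α) = (1 - ν * q ^ g j) / (1 + α) := by
        field_simp
        ring
      rw [h1, h2, div_mul_div_comm, ← sq]
      refine (div_le_div_iff_of_pos_right (by positivity)).mpr ?_
      have hνt : ν * q ^ g j ≤ 1 := by nlinarith
      nlinarith [mul_nonneg hν0 (sub_nonneg.mpr htq1),
        mul_nonneg (mul_pos hα htq).le (sub_nonneg.mpr hνt)]
    calc μ {ω | B' j ω - B j ω ≠ 0} ≤ μ ((B j ⁻¹' {0} ∩ B' j ⁻¹' {0})ᶜ) := measure_mono hsub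
      _ = 1 - μ (B j ⁻¹' {0} ∩ B' j ⁻¹' {0}) := by
          rw [measure_compl ((hBmeas j (measurableSet_singleton _)).inter
            (hB'meas j (measurableSet_singleton _))) (measure_ne_top μ _), measure_univ]
      _ ≤ ENNReal.ofReal c := by
          rw [hmul, hpB, hpB', ← ENNReal.ofReal_mul hx0]
          calc 1 - ENNReal.ofReal ((1 - α * (1 - q ^ g j) / (1 + α))
                * (1 - (α + ν * q ^ g j) / (1 + α)))
              ≤ 1 - ENNReal.ofReal ((1 - ν) / (1 + α) ^ 2) :=
                tsub_le_tsub_left (ENNReal.ofReal_le_ofReal hkey) 1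
            _ = ENNReal.ofReal c := by
                rw [hc, ← ENNReal.ofReal_one,
                  ← ENNReal.ofReal_sub _ (div_nonneg (by linarith) (by positivity))]
  have hTmeas : ∀ A : Finset ℤ,
      MeasurableSet {x : {i // i ∈ Jset A} → ℝ | ∀ j ∈ A, extB' A x j - extB A x j ≠ 0} := by
    intro A
    have : {x : {i // i ∈ Jset A} → ℝ | ∀ j ∈ A, extB' A x j - extB A x j ≠ 0}
        = ⋂ j ∈ A, {x | extB' A x j - extB A x j ≠ 0} := by
      ext x; simp [Set.mem_iInter]
    rw [this]
    exact MeasurableSet.biInter (A.countable_toSet) fun j _ =>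
      ((((measurable_extB' A j).sub (measurable_extB A j))
        (measurableSet_singleton (0:ℝ))).compl)
  have hpre : ∀ A : Finset ℤ, (⋂ j ∈ A, {ω | B' j ω - B j ω ≠ 0})
      = (fun a (i : {i // i ∈ Jset A}) => Sum.elim B B' i.1 a) ⁻¹'
        {x | ∀ j ∈ A, extB' A x j - extB A x j ≠ 0} := by
    intro A
    ext a
    simp only [Set.mem_iInter, Set.mem_preimage, Set.mem_setOf_eq]
    refine forall₂_congr fun j hj => ?_
    rw [extB'_apply B B' A hj a, extB_apply B B' A hj a]
  have hprodindep : ∀ A₁ A₂ : Finset ℤ, Disjoint A₁ A₂ →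
      μ ((⋂ j ∈ A₁, {ω | B' j ω - B j ω ≠ 0}) ∩ (⋂ j ∈ A₂, {ω | B' j ω - B j ω ≠ 0}))
        = μ (⋂ j ∈ A₁, {ω | B' j ω - B j ω ≠ 0})
          * μ (⋂ j ∈ A₂, {ω | B' j ω - B j ω ≠ 0}) := by
    intro A₁ A₂ hA
    have hY := hindep.indepFun_finset (Jset A₁) (Jset A₂) (Jset_disjoint hA) hSumMeas
    rw [hpre A₁, hpre A₂]
    exact hY.measure_inter_preimage_eq_mul _ _ (hTmeas A₁) (hTmeas A₂)
  have hdecay : ∀ N : ℕ, μ (⋂ j ∈ Finset.Icc (n₂ - (N:ℤ)) n₂, {ω | B' j ω - B j ω ≠ 0})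
      ≤ (ENNReal.ofReal c) ^ (N + 1) := by
    intro N
    induction N with
    | zero =>
      simp only [Nat.cast_zero, sub_zero, Finset.Icc_self, zero_add, pow_one]
      rw [Finset.set_biInter_singleton]
      exact hEbound n₂
    | succ N ih =>
      have hsplit : Finset.Icc (n₂ - ((N:ℤ)+1)) n₂
          = insert (n₂ - ((N:ℤ)+1)) (Finset.Icc (n₂ - (N:ℤ)) n₂) := by
        ext x; simp only [Finset.mem_Icc, Finset.mem_insert]; omega
      have hcast : ((N + 1 : ℕ) : ℤ) = (N : ℤ) + 1 := by push_cast; ring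
      rw [hcast, hsplit, Finset.set_biInter_insert]
      have hd : Disjoint ({n₂ - ((N:ℤ)+1)} : Finset ℤ) (Finset.Icc (n₂ - (N:ℤ)) n₂) := by
        simp only [Finset.disjoint_left, Finset.mem_singleton, Finset.mem_Icc]
        rintro x rfl h
        omega
      have h2 := hprodindep {n₂ - ((N:ℤ)+1)} (Finset.Icc (n₂ - (N:ℤ)) n₂) hd
      rw [Finset.set_biInter_singleton] at h2
      rw [h2, pow_succ]
      rw [mul_comm (ENNReal.ofReal c ^ (N+1)) (ENNReal.ofReal c)]
      exact mul_le_mul' (hEbound _) ih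
  have hBad : μ (⋂ N : ℕ, ⋂ j ∈ Finset.Icc (n₂ - (N:ℤ)) n₂, {ω | B' j ω - B j ω ≠ 0}) = 0 := by
    refine le_antisymm ?_ (by positivity)
    have hle : ∀ N : ℕ,
        μ (⋂ N : ℕ, ⋂ j ∈ Finset.Icc (n₂ - (N:ℤ)) n₂, {ω | B' j ω - B j ω ≠ 0})
          ≤ (ENNReal.ofReal c) ^ (N + 1) :=
      fun N => le_trans (measure_mono (Set.iInter_subset _ N)) (hdecay N)
    have htend : Filter.Tendsto (fun N : ℕ => (ENNReal.ofReal c) ^ (N + 1))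
        Filter.atTop (nhds 0) :=
      (ENNReal.tendsto_pow_atTop_nhds_zero_of_lt_one hc1).comp (Filter.tendsto_add_atTop_nat 1)
    exact le_of_tendsto_of_tendsto' tendsto_const_nhds htend hle
  have hG : ∀ᵐ a ∂μ, ∃ j₀, j₀ ≤ n₂ ∧ B' j₀ a - B j₀ a = 0 := by
    rw [MeasureTheory.ae_iff]
    refine measure_mono_null ?_ hBad
    intro a ha
    simp only [Set.mem_setOf_eq, not_exists, not_and] at ha
    simp only [Set.mem_iInter]
    intro N j hj
    have hj' := Finset.mem_Icc.mp hj
    exact ha j (by omega)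
  -- a.e. facts
  have hK2mem : ∀ᵐ a ∂μ, kpzKinf B B' n₂ a = 0 ∨ kpzKinf B B' n₂ a = 1 := by
    filter_upwards [hG] with a ha
    obtain ⟨j₀, hj₀, hD⟩ := ha
    rw [kpzKinf_eq_kpzF B B' n₂ j₀ j₀ a hj₀ le_rfl hD]
    exact kpzF_mem B B' hB01 hB'01 j₀ n₂ a
  have hK2eq : ∀ᵐ a ∂μ, Filter.Tendsto (fun N : ℕ => kpzF B B' (n₂ - N) n₂ a)
      Filter.atTop (nhds (kpzKinf B B' n₂ a)) := by
    filter_upwards [hG] with a ha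
    obtain ⟨j₀, hj₀, hD⟩ := ha
    have hev : (fun _ : ℕ => kpzKinf B B' n₂ a) =ᶠ[Filter.atTop]
        (fun N : ℕ => kpzF B B' (n₂ - N) n₂ a) := by
      filter_upwards [Filter.eventually_ge_atTop (n₂ - j₀).toNat] with N hN
      have hNle : n₂ - j₀ ≤ (N : ℤ) := le_trans (Int.self_le_toNat _) (by exact_mod_cast hN)
      exact kpzKinf_eq_kpzF B B' n₂ (n₂ - N) j₀ a hj₀ (by omega) hD
    exact Filter.Tendsto.congr' hev tendsto_const_nhds
  have hdecomp : ∀ᵐ a ∂μ, kpzKinf B B' n₁ a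
      = (∏ k ∈ Finset.Icc (n₂+1) n₁, (B' k a - B k a)) * kpzKinf B B' n₂ a
        + kpzF B B' (n₂+1) n₁ a := by
    filter_upwards [hG] with a ha
    obtain ⟨j₀, hj₀, hD⟩ := ha
    rw [kpzKinf_eq_kpzF B B' n₁ j₀ j₀ a (by omega) le_rfl hD,
        kpzKinf_eq_kpzF B B' n₂ j₀ j₀ a hj₀ le_rfl hD]
    exact kpzF_split B B' j₀ n₂ n₁ hj₀ hn a
  have hK2sm : AEStronglyMeasurable (kpzKinf B B' n₂) μ :=
    aestronglyMeasurable_of_tendsto_ae Filter.atTop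
      (fun N : ℕ => (hFmeas (n₂ - (N:ℤ)) n₂).aestronglyMeasurable) hK2eq
  have hK2bd : ∀ᵐ a ∂μ, ‖kpzKinf B B' n₂ a‖ ≤ 1 := by
    filter_upwards [hK2mem] with a h
    rcases h with h | h <;> rw [h] <;> norm_num
  have hK2int : Integrable (kpzKinf B B' n₂) μ := (integrable_const 1).mono' hK2sm hK2bd
  have hintF : ∀ m₀ n : ℤ, Integrable (kpzF B B' m₀ n) μ := fun m₀ n =>
    hint_of_bdd _ (hFmeas _ _) (kpzF_abs_le_one B B' hB01 hB'01 _ _)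
  have hlimF : Filter.Tendsto (fun N : ℕ => ∫ a, kpzF B B' (n₂ - N) n₂ a ∂μ)
      Filter.atTop (nhds (∫ a, kpzKinf B B' n₂ a ∂μ)) := by
    refine tendsto_integral_of_dominated_convergence (fun _ => (1:ℝ))
      (fun N => (hFmeas _ _).aestronglyMeasurable) (integrable_const 1)
      (fun N => ae_of_all μ fun a => by
        simpa [Real.norm_eq_abs] using kpzF_abs_le_one B B' hB01 hB'01 (n₂ - N) n₂ a) hK2eq
  have hmullim : ∀ X : Ω → ℝ, Measurable X → (∀ a, |X a| ≤ 1) →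
      (∀ N : ℕ, IndepFun X (kpzF B B' (n₂ - N) n₂) μ) →
      ∫ a, X a * kpzKinf B B' n₂ a ∂μ
        = (∫ a, X a ∂μ) * ∫ a, kpzKinf B B' n₂ a ∂μ := by
    intro X hXm hXb hXind
    have hXint : Integrable X μ := hint_of_bdd X hXm hXb
    have t1 : Filter.Tendsto (fun N : ℕ => ∫ a, X a * kpzF B B' (n₂ - N) n₂ a ∂μ)
        Filter.atTop (nhds (∫ a, X a * kpzKinf B B' n₂ a ∂μ)) := by
      refine tendsto_integral_of_dominated_convergence (fun _ => (1:ℝ))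
        (fun N => (hXm.mul (hFmeas _ _)).aestronglyMeasurable) (integrable_const 1)
        (fun N => ae_of_all μ fun a => ?_) ?_
      · have h1 := kpzF_abs_le_one B B' hB01 hB'01 (n₂ - N) n₂ a
        have h2 := hXb a
        simp only [Real.norm_eq_abs, abs_mul]
        nlinarith [abs_nonneg (X a), abs_nonneg (kpzF B B' (n₂ - N) n₂ a)]
      · filter_upwards [hK2eq] with a ha
        exact ha.const_mul (X a)
    have t2 : ∀ N : ℕ, ∫ a, X a * kpzF B B' (n₂ - N) n₂ a ∂μ
        = (∫ a, X a ∂μ) * ∫ a, kpzF B B' (n₂ - N) n₂ a ∂μ := by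
      intro N
      have h := (hXind N).integral_fun_mul_eq_mul_integral hXint.aestronglyMeasurable (hintF _ _).aestronglyMeasurable
      simpa using h
    exact tendsto_nhds_unique (t1.congr t2) (hlimF.const_mul _)
  -- independence instantiations
  have hindepS : ∀ N : ℕ, IndepFun (kpzF B B' (n₂+1) n₁) (kpzF B B' (n₂ - N) n₂) μ := by
    intro N
    obtain ⟨φ₁, hφ₁m, hφ₁⟩ := repF (n₂+1) n₁
    obtain ⟨φ₂, hφ₂m, hφ₂⟩ := repF (n₂ - N) n₂
    have hd : Disjoint (Finset.Icc (n₂+1) n₁) (Finset.Icc (n₂ - (N:ℤ)) n₂) := by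
      simp only [Finset.disjoint_left, Finset.mem_Icc]
      intro x hx hx2; omega
    have h := master _ _ hd φ₁ φ₂ hφ₁m hφ₂m
    rwa [funext hφ₁, funext hφ₂] at h
  have hindepP : ∀ N : ℕ,
      IndepFun (fun a => ∏ k ∈ Finset.Icc (n₂+1) n₁, (B' k a - B k a))
        (kpzF B B' (n₂ - N) n₂) μ := by
    intro N
    obtain ⟨φ₁, hφ₁m, hφ₁⟩ := repP (n₂+1) n₁
    obtain ⟨φ₂, hφ₂m, hφ₂⟩ := repF (n₂ - N) n₂
    have hd : Disjoint (Finset.Icc (n₂+1) n₁) (Finset.Icc (n₂ - (N:ℤ)) n₂) := by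
      simp only [Finset.disjoint_left, Finset.mem_Icc]
      intro x hx hx2; omega
    have h := master _ _ hd φ₁ φ₂ hφ₁m hφ₂m
    rwa [funext hφ₁, funext hφ₂] at h
  have hES_K2 := hmullim (kpzF B B' (n₂+1) n₁) (hFmeas _ _)
    (kpzF_abs_le_one B B' hB01 hB'01 _ _) hindepS
  have hEP_K2 := hmullim (fun a => ∏ k ∈ Finset.Icc (n₂+1) n₁, (B' k a - B k a))
    (hPmeas _ _) (hPbd _ _) hindepP
  -- integrability of products with K2
  have hPK2int : Integrable (fun a =>
      (∏ k ∈ Finset.Icc (n₂+1) n₁, (B' k a - B k a)) * kpzKinf B B' n₂ a) μ := by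
    refine (integrable_const 1).mono' ((hPmeas _ _).aestronglyMeasurable.mul hK2sm) ?_
    filter_upwards [hK2bd] with a ha
    have h1 := hPbd (n₂+1) n₁ a
    simp only [Real.norm_eq_abs, abs_mul] at ha ⊢
    nlinarith [abs_nonneg (∏ k ∈ Finset.Icc (n₂+1) n₁, (B' k a - B k a)),
      abs_nonneg (kpzKinf B B' n₂ a)]
  have hSK2int : Integrable (fun a => kpzF B B' (n₂+1) n₁ a * kpzKinf B B' n₂ a) μ := by
    refine (integrable_const 1).mono' ((hFmeas _ _).aestronglyMeasurable.mul hK2sm) ?_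
    filter_upwards [hK2bd] with a ha
    have h1 := kpzF_abs_le_one B B' hB01 hB'01 (n₂+1) n₁ a
    simp only [Real.norm_eq_abs, abs_mul] at ha ⊢
    nlinarith [abs_nonneg (kpzF B B' (n₂+1) n₁ a), abs_nonneg (kpzKinf B B' n₂ a)]
  -- first moment of K n₁
  have hEK1 : ∫ a, kpzKinf B B' n₁ a ∂μ
      = (∫ a, (∏ k ∈ Finset.Icc (n₂+1) n₁, (B' k a - B k a)) ∂μ)
          * (∫ a, kpzKinf B B' n₂ a ∂μ)
        + ∫ a, kpzF B B' (n₂+1) n₁ a ∂μ := by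
    rw [integral_congr_ae hdecomp, integral_add hPK2int (hintF _ _), hEP_K2]
  -- second moment
  have hEK12 : ∫ a, kpzKinf B B' n₁ a * kpzKinf B B' n₂ a ∂μ
      = (∫ a, (∏ k ∈ Finset.Icc (n₂+1) n₁, (B' k a - B k a)) ∂μ)
          * (∫ a, kpzKinf B B' n₂ a ∂μ)
        + (∫ a, kpzF B B' (n₂+1) n₁ a ∂μ) * (∫ a, kpzKinf B B' n₂ a ∂μ) := by
    have hae : ∀ᵐ a ∂μ, kpzKinf B B' n₁ a * kpzKinf B B' n₂ a
        = (∏ k ∈ Finset.Icc (n₂+1) n₁, (B' k a - B k a)) * kpzKinf B B' n₂ a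
          + kpzF B B' (n₂+1) n₁ a * kpzKinf B B' n₂ a := by
      filter_upwards [hdecomp, hK2mem] with a h1 h2
      rw [h1]
      rcases h2 with h | h <;> rw [h] <;> ring
    rw [integral_congr_ae hae, integral_add hPK2int hSK2int, hEP_K2, hES_K2]
  -- expectation of the product of differences
  have hED : ∀ k : ℤ, ∫ a, (B' k a - B k a) ∂μ = ((ν + α) * q ^ g k) / (1 + α) := by
    intro k
    have hBint : Integrable (B k) μ := hint_of_bdd _ (hBmeas k)
      (fun ω => by rcases hB01 k ω with h | h <;> rw [h] <;> norm_num)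
    have hB'int : Integrable (B' k) μ := hint_of_bdd _ (hB'meas k)
      (fun ω => by rcases hB'01 k ω with h | h <;> rw [h] <;> norm_num)
    rw [integral_sub hB'int hBint]
    have hiB : ∫ a, B k a ∂μ = α * (1 - q ^ g k) / (1 + α) := by
      have hBeq : B k = Set.indicator (B k ⁻¹' {1}) (fun _ => (1:ℝ)) := by
        funext ω
        rcases hB01 k ω with h | h <;> simp [Set.indicator_apply, h]
      rw [hBeq, integral_indicator_const (1:ℝ) (hBmeas k (measurableSet_singleton 1)),
        smul_eq_mul, mul_one, show B k ⁻¹' {1} = {ω | B k ω = 1} from rfl,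
        measureReal_def, hBp k, ENNReal.toReal_ofReal
          (div_nonneg (by nlinarith [(hqg k).2]) hα1.le)]
    have hiB' : ∫ a, B' k a ∂μ = (α + ν * q ^ g k) / (1 + α) := by
      have hB'eq : B' k = Set.indicator (B' k ⁻¹' {1}) (fun _ => (1:ℝ)) := by
        funext ω
        rcases hB'01 k ω with h | h <;> simp [Set.indicator_apply, h]
      rw [hB'eq, integral_indicator_const (1:ℝ) (hB'meas k (measurableSet_singleton 1)),
        smul_eq_mul, mul_one, show B' k ⁻¹' {1} = {ω | B' k ω = 1} from rfl,
        measureReal_def, hB'p k, ENNReal.toReal_ofReal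
          (div_nonneg (by nlinarith [(hqg k).1]) hα1.le)]
    rw [hiB, hiB']
    field_simp
    ring
  have hEP : ∫ a, (∏ k ∈ Finset.Icc (n₂+1) n₁, (B' k a - B k a)) ∂μ
      = ∏ k ∈ Finset.Icc (n₂+1) n₁, ((ν + α) * q ^ g k) / (1 + α) := by
    refine Int.le_induction (motive := fun n _ => ∫ a, (∏ k ∈ Finset.Icc (n₂+1) n, (B' k a - B k a)) ∂μ
      = ∏ k ∈ Finset.Icc (n₂+1) n, ((ν + α) * q ^ g k) / (1 + α)) ?_ ?_ n₁ hn
    · beta_reduce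
      rw [Finset.Icc_eq_empty (by omega)]
      simp
    · intro n hn2 ih
      beta_reduce at ih ⊢
      have hins : Finset.Icc (n₂+1) (n+1) = insert (n+1) (Finset.Icc (n₂+1) n) := by
        ext x; simp only [Finset.mem_Icc, Finset.mem_insert]; omega
      have hfe : (fun a => ∏ k ∈ Finset.Icc (n₂+1) (n+1), (B' k a - B k a))
          = fun a => (B' (n+1) a - B (n+1) a) * ∏ k ∈ Finset.Icc (n₂+1) n, (B' k a - B k a) := by
        funext a
        rw [hins, Finset.prod_insert (by simp [Finset.mem_Icc])]
      have hindepD : IndepFun (fun a => B' (n+1) a - B (n+1) a)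
          (fun a => ∏ k ∈ Finset.Icc (n₂+1) n, (B' k a - B k a)) μ := by
        obtain ⟨φ₁, hφ₁m, hφ₁⟩ := repP (n+1) (n+1)
        obtain ⟨φ₂, hφ₂m, hφ₂⟩ := repP (n₂+1) n
        have hd : Disjoint (Finset.Icc (n+1) (n+1)) (Finset.Icc (n₂+1) n) := by
          simp only [Finset.disjoint_left, Finset.mem_Icc]
          intro x hx hx2; omega
        have h := master _ _ hd φ₁ φ₂ hφ₁m hφ₂m
        rw [funext hφ₁, funext hφ₂] at h
        have he : (fun x : Ω => ∏ k ∈ Finset.Icc (n+1) (n+1), (B' k x - B k x))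
            = fun a => B' (n+1) a - B (n+1) a := by
          funext x
          rw [Finset.Icc_self, Finset.prod_singleton]
        rwa [he] at h
      have hDint : Integrable (fun a => B' (n+1) a - B (n+1) a) μ :=
        hint_of_bdd _ ((hB'meas _).sub (hBmeas _)) (fun ω => hDbd _ ω)
      have hPint' : Integrable (fun a => ∏ k ∈ Finset.Icc (n₂+1) n, (B' k a - B k a)) μ :=
        hint_of_bdd _ (hPmeas _ _) (hPbd _ _)
      rw [hfe]
      have h2 : ∫ a, (B' (n+1) a - B (n+1) a)
            * ∏ k ∈ Finset.Icc (n₂+1) n, (B' k a - B k a) ∂μ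
          = (∫ a, (B' (n+1) a - B (n+1) a) ∂μ)
            * ∫ a, (∏ k ∈ Finset.Icc (n₂+1) n, (B' k a - B k a)) ∂μ := by
        simpa using hindepD.integral_fun_mul_eq_mul_integral hDint.aestronglyMeasurable hPint'.aestronglyMeasurable
      rw [h2, ih, hED (n+1), hins, Finset.prod_insert (by simp [Finset.mem_Icc])]
  rw [hEK12, hEK1, ← hEP]
  ring
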